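/- Let s > 1/2 and let Z_{N−M} denote the Nth roots of unity on the unit circle with M consecutive points removed, where M = M(N) satisfies M → ∞ and M/N → 0 as N → ∞, and assume N^s·M/(N−M) → ∞. Then, with B̃_{2s}(1) = 2Σ_{ℓ≥1}(1+ℓ²)^{−s}, the worst-case error satisfies wce(Q[Z_{N−M}]; W_2^s(S¹)) = √(B̃_{2s}(1)) · (M/(N−M)) · (1 + o(1)) as N → ∞; in particular (Z_{N−M}) is not a QMC design sequence for W_2^s(S¹). -/

import Mathlib

open Real Finset Filter

/-- The zonal Bessel kernel (constant term removed) on the unit circle, as a function of the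
angle: `B̃_s(cos φ) = 2 Σ_{ℓ≥1} cos(ℓφ)/(1+ℓ²)^{s/2}`. -/
noncomputable def circleBesselKernel (s : ℝ) (φ : ℝ) : ℝ :=
  2 * ∑' ℓ : ℕ, Real.cos (((ℓ : ℝ) + 1) * φ) / (1 + ((ℓ : ℝ) + 1) ^ 2) ^ (s / 2)

/-- Squared worst-case error for the `N`th roots of unity with the first `M` (consecutive)
points removed, via the reproducing-kernel formula. -/
noncomputable def wceSqRootsMinus (s : ℝ) (M N : ℕ) : ℝ :=
  (1 / ((N : ℝ) - (M : ℝ)) ^ 2) * ∑ j ∈ Finset.Ico M N, ∑ k ∈ Finset.Ico M N,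
    circleBesselKernel (2 * s) (2 * π * ((j : ℝ) - (k : ℝ)) / N)

namespace RW



noncomputable def ck (s : ℝ) (ℓ : ℕ) : ℝ := (1 + ((ℓ : ℝ) + 1) ^ 2) ^ (-s)

lemma ck_pos (s : ℝ) (ℓ : ℕ) : 0 < ck s ℓ := Real.rpow_pos_of_pos (by positivity) _

lemma ck_le (s : ℝ) (hs : 0 < s) (ℓ : ℕ) : ck s ℓ ≤ ((ℓ : ℝ) + 1) ^ (-(2 * s)) := by
  have h1 : (0:ℝ) < ((ℓ:ℝ)+1)^2 := by positivity
  have h2 := Real.rpow_le_rpow_of_nonpos h1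
    (by linarith : ((ℓ:ℝ)+1)^2 ≤ 1 + ((ℓ:ℝ)+1)^2) (by linarith : -s ≤ 0)
  refine h2.trans_eq ?_
  rw [← Real.rpow_natCast ((ℓ:ℝ)+1) 2, ← Real.rpow_mul (by positivity)]
  congr 1
  push_cast
  ring

lemma summable_ck {s : ℝ} (hs : 1/2 < s) : Summable (ck s) := by
  have h2 : Summable (fun n : ℕ => ((n : ℝ)) ^ (-(2*s))) :=
    Real.summable_nat_rpow.mpr (by linarith)
  have h3 : Summable (fun ℓ : ℕ => (((ℓ + 1 : ℕ)) : ℝ) ^ (-(2*s))) :=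
    (summable_nat_add_iff 1).mpr h2
  refine Summable.of_nonneg_of_le (fun ℓ => (ck_pos s ℓ).le) (fun ℓ => ?_) h3
  push_cast
  exact ck_le s (by linarith) ℓ

noncomputable def zz (N ℓ : ℕ) : ℂ :=
  Complex.exp (((((ℓ : ℝ) + 1) * (2 * π / N)) : ℝ) * Complex.I)

lemma zz_pow (N ℓ j : ℕ) :
    zz N ℓ ^ j = Complex.exp ((((j : ℝ) * (((ℓ:ℝ)+1) * (2*π/N))) : ℝ) * Complex.I) := by
  rw [zz, ← Complex.exp_nat_mul]
  congr 1
  push_cast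
  ring

lemma abs_zz_pow (N ℓ j : ℕ) : ‖zz N ℓ ^ j‖ = 1 := by
  rw [zz_pow]; exact Complex.norm_exp_ofReal_mul_I _

lemma zz_pow_N (N ℓ : ℕ) (hN : 0 < N) : zz N ℓ ^ N = 1 := by
  rw [zz_pow]
  have hN' : (N:ℝ) ≠ 0 := Nat.cast_ne_zero.mpr hN.ne'
  have h2 : ((((N : ℝ) * (((ℓ:ℝ)+1) * (2*π/N))) : ℝ) : ℂ) * Complex.I
      = ((ℓ + 1 : ℤ) : ℂ) * (2 * (π:ℂ) * Complex.I) := by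
    have h3 : ((N : ℝ) * (((ℓ:ℝ)+1) * (2*π/N)) : ℝ) = ((ℓ:ℝ)+1) * (2*π) := by
      field_simp
    rw [h3]; push_cast; ring
  rw [h2, Complex.exp_int_mul_two_pi_mul_I]

lemma zz_ne_one {N ℓ : ℕ} (hN : 0 < N) (h : ¬ N ∣ (ℓ + 1)) : zz N ℓ ≠ 1 := by
  intro h1
  rw [zz, Complex.exp_eq_one_iff] at h1
  obtain ⟨n, hn⟩ := h1
  have hn' : (((((ℓ : ℝ) + 1) * (2 * π / N)) : ℝ) : ℂ) * Complex.I
      = (((n : ℝ) * (2 * π) : ℝ) : ℂ) * Complex.I := by rw [hn]; push_cast; ring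
  have hn2 : (((ℓ : ℝ) + 1) * (2 * π / N)) = (n : ℝ) * (2 * π) :=
    Complex.ofReal_inj.mp (mul_right_cancel₀ Complex.I_ne_zero hn')
  have hπ : (π:ℝ) ≠ 0 := Real.pi_ne_zero
  have hNr : (N:ℝ) ≠ 0 := Nat.cast_ne_zero.mpr hN.ne'
  have hn3 : ((ℓ:ℝ) + 1) = (n:ℝ) * (N:ℝ) := by
    have h2π : (2*π:ℝ) ≠ 0 := by positivity
    have e1 : ((ℓ:ℝ)+1) * (2*π) = ((n:ℝ) * (N:ℝ)) * (2*π) := by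
      calc ((ℓ:ℝ)+1) * (2*π) = (((ℓ:ℝ)+1) * (2*π/N)) * N := by field_simp
      _ = ((n:ℝ)*(2*π))*N := by rw [hn2]
      _ = ((n:ℝ) * (N:ℝ)) * (2*π) := by ring
    exact mul_right_cancel₀ h2π e1
  have hn4 : ((ℓ:ℤ) + 1) = n * N := by exact_mod_cast hn3
  exact h ⟨n.toNat, by
    have hn0 : 0 < n := by
      by_contra hcon
      push_neg at hcon
      have : (n:ℝ) * N ≤ 0 := mul_nonpos_of_nonpos_of_nonneg (by exact_mod_cast hcon) (Nat.cast_nonneg N)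
      rw [← hn3] at this
      have : (0:ℝ) < (ℓ:ℝ) + 1 := by positivity
      linarith
    have : ((ℓ + 1 : ℕ) : ℤ) = (N * n.toNat : ℕ) := by
      push_cast [Int.toNat_of_nonneg hn0.le]
      linarith [hn4]
    exact_mod_cast this⟩

lemma sum_Ico_eq {M N : ℕ} (ℓ : ℕ) (hMN : M ≤ N) (hN : 0 < N) (h : ¬ N ∣ (ℓ+1)) :
    ∑ j ∈ Finset.Ico M N, zz N ℓ ^ j = - ∑ j ∈ Finset.range M, zz N ℓ ^ j := by
  have h0 : ∑ j ∈ Finset.range N, zz N ℓ ^ j = 0 := by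
    rw [geom_sum_eq (zz_ne_one hN h), zz_pow_N N ℓ hN]
    simp
  rw [Finset.sum_Ico_eq_sub _ hMN, h0]
  ring

lemma abs_sum_le (t : Finset ℕ) (N ℓ : ℕ) :
    ‖∑ j ∈ t, zz N ℓ ^ j‖ ≤ t.card := by
  calc ‖∑ j ∈ t, zz N ℓ ^ j‖ ≤ ∑ j ∈ t, ‖zz N ℓ ^ j‖ := by
        simpa using norm_sum_le t (fun j => zz N ℓ ^ j)
  _ = t.card := by
        simp only [abs_zz_pow, Finset.sum_const, nsmul_eq_mul, mul_one]

lemma abs_exp_sub_one (x : ℝ) :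
    ‖Complex.exp ((x:ℝ) * Complex.I) - 1‖ ≤ |x| := by
  have hre : (Complex.exp ((x:ℝ) * Complex.I) - 1).re = Real.cos x - 1 := by
    simp [Complex.exp_ofReal_mul_I_re]
  have him : (Complex.exp ((x:ℝ) * Complex.I) - 1).im = Real.sin x := by
    simp [Complex.exp_ofReal_mul_I_im]
  have hns : Complex.normSq (Complex.exp ((x:ℝ) * Complex.I) - 1) = 2 - 2 * Real.cos x := by
    rw [Complex.normSq_apply, hre, him]
    nlinarith [Real.sin_sq_add_cos_sq x]
  have hcos : 1 - Real.cos x ≤ x^2 / 2 := by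
    have h1 : Real.cos x = 2 * Real.cos (x/2)^2 - 1 := by
      have := Real.cos_two_mul (x/2)
      rw [show 2*(x/2) = x by ring] at this
      linarith
    have h2 : Real.sin (x/2)^2 + Real.cos (x/2)^2 = 1 := Real.sin_sq_add_cos_sq (x/2)
    have h3 : Real.sin (x/2)^2 ≤ (x/2)^2 := Real.sin_sq_le_sq
    nlinarith
  rw [Complex.norm_def, hns]
  calc Real.sqrt (2 - 2*Real.cos x) ≤ Real.sqrt (x^2) := by
        apply Real.sqrt_le_sqrt; nlinarith
  _ = |x| := Real.sqrt_sq_eq_abs x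

lemma abs_zz_pow_sub_one (N ℓ j : ℕ) :
    ‖zz N ℓ ^ j - 1‖ ≤ (j:ℝ) * (((ℓ:ℝ)+1) * (2*π/N)) := by
  rw [zz_pow]
  refine (abs_exp_sub_one _).trans_eq ?_
  rw [abs_of_nonneg (by positivity)]

lemma abs_sum_range_sub (M N ℓ : ℕ) :
    ‖(∑ j ∈ Finset.range M, zz N ℓ ^ j) - (M:ℂ)‖
      ≤ (M:ℝ)^2 * (((ℓ:ℝ)+1) * (2*π/N)) := by
  have hM : (M : ℂ) = ∑ _j ∈ Finset.range M, (1:ℂ) := by simp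
  rw [hM, ← Finset.sum_sub_distrib]
  calc ‖∑ j ∈ Finset.range M, (zz N ℓ ^ j - 1)‖
      ≤ ∑ j ∈ Finset.range M, ‖zz N ℓ ^ j - 1‖ := by
        simpa using norm_sum_le (Finset.range M) (fun j => zz N ℓ ^ j - 1)
  _ ≤ ∑ j ∈ Finset.range M, (M:ℝ) * (((ℓ:ℝ)+1) * (2*π/N)) := by
        refine Finset.sum_le_sum (fun j hj => ?_)
        refine (abs_zz_pow_sub_one N ℓ j).trans ?_
        have hjM : (j:ℝ) ≤ M := by
          exact_mod_cast (Finset.mem_range.mp hj).le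
        have : (0:ℝ) ≤ ((ℓ:ℝ)+1) * (2*π/N) := by positivity
        nlinarith
  _ = (M:ℝ)^2 * (((ℓ:ℝ)+1) * (2*π/N)) := by
        rw [Finset.sum_const, Finset.card_range]
        push_cast; ring

lemma cos_eq_re (N ℓ j k : ℕ) :
    Real.cos (((ℓ:ℝ)+1) * (2 * π * ((j:ℝ) - (k:ℝ)) / N))
      = (zz N ℓ ^ j * (starRingEnd ℂ) (zz N ℓ ^ k)).re := by
  rw [zz_pow, zz_pow, ← Complex.exp_conj]
  have h1 : (starRingEnd ℂ) (((((k:ℝ) * (((ℓ:ℝ)+1) * (2*π/N))) : ℝ) : ℂ) * Complex.I)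
      = (((-((k:ℝ) * (((ℓ:ℝ)+1) * (2*π/N)))) : ℝ) : ℂ) * Complex.I := by
    rw [map_mul, Complex.conj_ofReal, Complex.conj_I]
    push_cast
    ring
  rw [h1, ← Complex.exp_add]
  have h2 : ((((j:ℝ) * (((ℓ:ℝ)+1) * (2*π/N))) : ℝ) : ℂ) * Complex.I
      + (((-((k:ℝ) * (((ℓ:ℝ)+1) * (2*π/N)))) : ℝ) : ℂ) * Complex.I
      = ((((j:ℝ) * (((ℓ:ℝ)+1) * (2*π/N)) - (k:ℝ) * (((ℓ:ℝ)+1) * (2*π/N))) : ℝ) : ℂ)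
        * Complex.I := by
    push_cast; ring
  rw [h2, Complex.exp_ofReal_mul_I_re]
  congr 1
  ring

lemma double_sum_eq (M N ℓ : ℕ) :
    ∑ j ∈ Finset.Ico M N, ∑ k ∈ Finset.Ico M N,
      Real.cos (((ℓ:ℝ)+1) * (2*π*((j:ℝ)-(k:ℝ))/N))
      = Complex.normSq (∑ j ∈ Finset.Ico M N, zz N ℓ ^ j) := by
  simp_rw [cos_eq_re]
  have h1 : ∑ j ∈ Finset.Ico M N, ∑ k ∈ Finset.Ico M N,
      (zz N ℓ ^ j * (starRingEnd ℂ) (zz N ℓ ^ k)).re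
      = ((∑ j ∈ Finset.Ico M N, zz N ℓ ^ j) *
          (starRingEnd ℂ) (∑ k ∈ Finset.Ico M N, zz N ℓ ^ k)).re := by
    rw [map_sum, Finset.sum_mul_sum, Complex.re_sum]
    refine Finset.sum_congr rfl (fun j _ => ?_)
    rw [Complex.re_sum]
  rw [h1, Complex.mul_conj, Complex.ofReal_re]

lemma kernel_eq (s : ℝ) (φ : ℝ) :
    circleBesselKernel (2*s) φ = 2 * ∑' ℓ : ℕ, Real.cos (((ℓ:ℝ)+1)*φ) * ck s ℓ := by
  unfold circleBesselKernel ck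
  congr 1
  apply tsum_congr; intro ℓ
  rw [show (2*s)/2 = s by ring, div_eq_mul_inv, ← Real.rpow_neg (by positivity)]

lemma kernel_zero (s : ℝ) :
    circleBesselKernel (2*s) 0 = 2 * ∑' ℓ : ℕ, ck s ℓ := by
  rw [kernel_eq s 0]
  congr 1
  apply tsum_congr; intro ℓ
  rw [mul_zero, Real.cos_zero, one_mul]

lemma summable_cos_ck {s : ℝ} (hs : 1/2 < s) (φ : ℝ) :
    Summable (fun ℓ : ℕ => Real.cos (((ℓ:ℝ)+1)*φ) * ck s ℓ) := by
  refine Summable.of_norm_bounded (summable_ck hs) (fun ℓ => ?_)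
  rw [Real.norm_eq_abs, abs_mul, abs_of_pos (ck_pos s ℓ)]
  exact mul_le_of_le_one_left (ck_pos s ℓ).le (Real.abs_cos_le_one _)

lemma wce_eq (s : ℝ) (hs : 1/2 < s) (M N : ℕ) :
    wceSqRootsMinus s M N = (1/((N:ℝ)-M)^2) *
      (2 * ∑' ℓ : ℕ, ck s ℓ * Complex.normSq (∑ j ∈ Finset.Ico M N, zz N ℓ ^ j)) := by
  unfold wceSqRootsMinus
  congr 1
  have hker : ∀ j k : ℕ, circleBesselKernel (2*s) (2*π*((j:ℝ)-(k:ℝ))/N)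
      = 2 * ∑' ℓ : ℕ, Real.cos (((ℓ:ℝ)+1)*(2*π*((j:ℝ)-(k:ℝ))/N)) * ck s ℓ :=
    fun j k => kernel_eq s _
  simp_rw [hker, ← Finset.mul_sum]
  congr 1
  have hswap1 : ∀ j : ℕ, ∑ k ∈ Finset.Ico M N,
      (∑' ℓ : ℕ, Real.cos (((ℓ:ℝ)+1)*(2*π*((j:ℝ)-(k:ℝ))/N)) * ck s ℓ)
      = ∑' ℓ : ℕ, ∑ k ∈ Finset.Ico M N,
          Real.cos (((ℓ:ℝ)+1)*(2*π*((j:ℝ)-(k:ℝ))/N)) * ck s ℓ := by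
    intro j
    exact (Summable.tsum_finsetSum (fun k _ => summable_cos_ck hs _)).symm
  simp_rw [hswap1]
  rw [← Summable.tsum_finsetSum (fun j _ => summable_sum (fun k _ => summable_cos_ck hs _))]
  apply tsum_congr; intro ℓ
  simp_rw [← Finset.sum_mul]
  rw [double_sum_eq M N ℓ, mul_comm]

lemma summable_pow2s {s : ℝ} (hs : 1/2 < s) :
    Summable (fun ν : ℕ => ((ν:ℝ)+1) ^ (-(2*s))) := by
  have h2 : Summable (fun n : ℕ => ((n : ℝ)) ^ (-(2*s))) :=
    Real.summable_nat_rpow.mpr (by linarith)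
  have h3 := (summable_nat_add_iff 1).mpr h2
  refine h3.congr (fun ν => ?_)
  push_cast
  rfl

lemma tsum_div_le {s : ℝ} (hs : 1/2 < s) {N : ℕ} (hN : 0 < N) :
    ∑' ℓ : ℕ, (if N ∣ (ℓ+1) then ck s ℓ else 0)
      ≤ (N:ℝ)^(-(2*s)) * ∑' ν : ℕ, ((ν:ℝ)+1) ^ (-(2*s)) := by
  set w : ℕ → ℝ := fun ℓ => if N ∣ (ℓ+1) then ck s ℓ else 0 with hw
  set i : ℕ → ℕ := fun ν => (ν+1)*N - 1 with hi
  have hiN : ∀ ν, 1 ≤ (ν+1)*N := fun ν => Nat.one_le_iff_ne_zero.mpr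
    (Nat.mul_ne_zero (Nat.succ_ne_zero ν) hN.ne')
  have hinj : Function.Injective i := by
    intro a b hab
    simp only [hi] at hab
    have h1 : (a+1)*N - 1 + 1 = (b+1)*N - 1 + 1 := by rw [hab]
    rw [Nat.sub_add_cancel (hiN a), Nat.sub_add_cancel (hiN b)] at h1
    exact Nat.succ_injective (Nat.eq_of_mul_eq_mul_right hN h1)
  have hsupp : Function.support w ⊆ Set.range i := by
    intro ℓ hℓ
    simp only [Function.mem_support, hw] at hℓ
    by_cases hdvd : N ∣ (ℓ+1)
    · obtain ⟨d, hd⟩ := hdvd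
      have hd1 : 1 ≤ d := by
        rcases Nat.eq_zero_or_pos d with h0 | h1
        · subst h0; simp at hd
        · exact h1
      have hd' : d*N = ℓ+1 := by rw [Nat.mul_comm] at hd; omega
      refine ⟨d - 1, ?_⟩
      simp only [hi]
      have hdd : d - 1 + 1 = d := by omega
      rw [hdd]
      omega
    · simp [hdvd] at hℓ
  have heq : ∑' ℓ, w ℓ = ∑' ν, w (i ν) := (Function.Injective.tsum_eq hinj hsupp).symm
  rw [heq]
  have hterm : ∀ ν : ℕ, w (i ν) ≤ ((ν:ℝ)+1) ^ (-(2*s)) * (N:ℝ)^(-(2*s)) := by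
    intro ν
    have hiν : i ν + 1 = (ν+1)*N := by
      simp only [hi]; exact Nat.sub_add_cancel (hiN ν)
    have hdvd : N ∣ (i ν + 1) := by
      rw [hiν]; exact dvd_mul_left N (ν+1)
    have hwv : w (i ν) = ck s (i ν) := by simp only [hw, if_pos hdvd]
    rw [hwv]
    have hcast : ((i ν : ℝ) + 1) = ((ν:ℝ)+1) * N := by
      have h2 := congrArg (fun n : ℕ => (n : ℝ)) hiν
      push_cast at h2
      linarith
    calc ck s (i ν) ≤ ((i ν : ℝ) + 1) ^ (-(2*s)) := ck_le s (by linarith) _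
    _ = (((ν:ℝ)+1) * N) ^ (-(2*s)) := by rw [hcast]
    _ = ((ν:ℝ)+1) ^ (-(2*s)) * (N:ℝ)^(-(2*s)) := by
        rw [Real.mul_rpow (by positivity) (Nat.cast_nonneg N)]
  have hsum : Summable (fun ν : ℕ => ((ν:ℝ)+1) ^ (-(2*s)) * (N:ℝ)^(-(2*s))) :=
    (summable_pow2s hs).mul_right _
  have hwnn : ∀ ν, 0 ≤ w (i ν) := by
    intro ν; simp only [hw]
    split
    · exact (ck_pos s _).le
    · exact le_refl 0
  calc ∑' ν, w (i ν) ≤ ∑' ν : ℕ, ((ν:ℝ)+1) ^ (-(2*s)) * (N:ℝ)^(-(2*s)) :=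
        Summable.tsum_le_tsum hterm (Summable.of_nonneg_of_le hwnn hterm hsum) hsum
  _ = (N:ℝ)^(-(2*s)) * ∑' ν : ℕ, ((ν:ℝ)+1) ^ (-(2*s)) := by
        rw [tsum_mul_right]; ring

lemma summable_w {s : ℝ} (hs : 1/2 < s) (N : ℕ) :
    Summable (fun ℓ : ℕ => if N ∣ (ℓ+1) then ck s ℓ else 0) := by
  refine Summable.of_nonneg_of_le (fun ℓ => ?_) (fun ℓ => ?_) (summable_ck hs)
  · split
    · exact (ck_pos s _).le
    · exact le_refl 0
  · split
    · exact le_refl _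
    · exact (ck_pos s _).le



noncomputable def TT (M N ℓ : ℕ) : ℝ :=
  Complex.normSq (∑ j ∈ Finset.Ico M N, zz N ℓ ^ j)

noncomputable def GG (s : ℝ) (M N ℓ : ℕ) : ℝ := ck s ℓ * (TT M N ℓ / (M:ℝ)^2)

lemma TT_nonneg (M N ℓ : ℕ) : 0 ≤ TT M N ℓ := Complex.normSq_nonneg _

lemma GG_nonneg (s : ℝ) (M N ℓ : ℕ) : 0 ≤ GG s M N ℓ :=
  mul_nonneg (ck_pos s ℓ).le (div_nonneg (TT_nonneg M N ℓ) (by positivity))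

lemma TT_le_gen (M N ℓ : ℕ) (hMN : M ≤ N) : TT M N ℓ ≤ ((N:ℝ) - M)^2 := by
  rw [TT, ← Complex.sq_norm]
  have h1 := abs_sum_le (Finset.Ico M N) N ℓ
  rw [Nat.card_Ico] at h1
  have h2 : ((N - M : ℕ) : ℝ) = (N:ℝ) - M := by
    push_cast [Nat.cast_sub hMN]; ring
  rw [h2] at h1
  have h0 : (0:ℝ) ≤ ‖∑ j ∈ Finset.Ico M N, zz N ℓ ^ j‖ := norm_nonneg _
  nlinarith

lemma TT_eq_range {M N ℓ : ℕ} (hMN : M ≤ N) (hN : 0 < N) (h : ¬ N ∣ (ℓ+1)) :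
    TT M N ℓ = Complex.normSq (∑ j ∈ Finset.range M, zz N ℓ ^ j) := by
  rw [TT, sum_Ico_eq ℓ hMN hN h, Complex.normSq_neg]

lemma TT_le_ndvd {M N ℓ : ℕ} (hMN : M ≤ N) (hN : 0 < N) (h : ¬ N ∣ (ℓ+1)) :
    TT M N ℓ ≤ (M:ℝ)^2 := by
  rw [TT_eq_range hMN hN h, ← Complex.sq_norm]
  have h1 := abs_sum_le (Finset.range M) N ℓ
  rw [Finset.card_range] at h1
  have h0 : (0:ℝ) ≤ ‖∑ j ∈ Finset.range M, zz N ℓ ^ j‖ := norm_nonneg _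
  nlinarith

lemma wce_eq2 (s : ℝ) (hs : 1/2 < s) (M N : ℕ) (hM : 0 < M) (hMN : M < N) :
    wceSqRootsMinus s M N
      = (2 * ∑' ℓ : ℕ, GG s M N ℓ) * ((M:ℝ)/((N:ℝ)-M))^2 := by
  rw [wce_eq s hs M N]
  have hMr : (M:ℝ) ≠ 0 := Nat.cast_ne_zero.mpr hM.ne'
  have hNM : ((N:ℝ) - M) ≠ 0 := by
    have : (M:ℝ) < N := by exact_mod_cast hMN
    linarith
  have htsum : ∑' ℓ : ℕ, ck s ℓ * Complex.normSq (∑ j ∈ Finset.Ico M N, zz N ℓ ^ j)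
      = (∑' ℓ : ℕ, GG s M N ℓ) * (M:ℝ)^2 := by
    rw [← tsum_mul_right]
    apply tsum_congr; intro ℓ
    rw [GG, TT]
    field_simp
  rw [htsum]
  field_simp

/-- pointwise limit of the non-divisible part -/
lemma u_tendsto (s : ℝ) (M : ℕ → ℕ)
    (hM1 : ∀ᶠ N : ℕ in atTop, 1 ≤ M N ∧ 2 * M N < N)
    (hMsmall : Tendsto (fun N : ℕ => (M N : ℝ) / (N : ℝ)) atTop (nhds 0)) (ℓ : ℕ) :
    Tendsto (fun N : ℕ => if N ∣ (ℓ+1) then (0:ℝ) else GG s (M N) N ℓ)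
      atTop (nhds (ck s ℓ)) := by
  set a : ℕ → ℝ := fun N => ‖∑ j ∈ Finset.range (M N), zz N ℓ ^ j‖ / (M N) with ha
  have ha1 : Tendsto a atTop (nhds 1) := by
    rw [← tendsto_sub_nhds_zero_iff]
    refine squeeze_zero_norm' (a := fun N => (2*π*((ℓ:ℝ)+1)) * ((M N : ℝ)/N)) ?_ ?_
    · filter_upwards [hM1] with N hN
      obtain ⟨h1, h2⟩ := hN
      have hNpos : 0 < N := by omega
      have hMr : (0:ℝ) < M N := by exact_mod_cast h1
      have hNr : (0:ℝ) < N := by exact_mod_cast hNpos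
      set S := ∑ j ∈ Finset.range (M N), zz N ℓ ^ j with hS
      have hb1 : |‖S‖ - (M N : ℝ)| ≤ (M N:ℝ)^2 * (((ℓ:ℝ)+1) * (2*π/N)) := by
        have := abs_norm_sub_norm_le S ((M N : ℕ) : ℂ)
        have hMabs : ‖((M N : ℕ) : ℂ)‖ = (M N : ℝ) := by
          simp
        rw [hMabs] at this
        exact this.trans (abs_sum_range_sub (M N) N ℓ)
      have hM0 : (M N : ℝ) ≠ 0 := ne_of_gt hMr
      have heq : a N - 1 = (‖S‖ - M N) / M N := by
        simp only [ha]
        field_simp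
        rfl
      rw [Real.norm_eq_abs, heq, abs_div, abs_of_pos hMr]
      rw [div_le_iff₀ hMr]
      calc |‖S‖ - (M N:ℝ)| ≤ (M N:ℝ)^2 * (((ℓ:ℝ)+1) * (2*π/N)) := hb1
      _ = 2*π*((ℓ:ℝ)+1) * ((M N : ℝ)/N) * M N := by field_simp
    · have := hMsmall.const_mul (2*π*((ℓ:ℝ)+1))
      simpa using this
  have hlim : Tendsto (fun N => ck s ℓ * (a N)^2) atTop (nhds (ck s ℓ)) := by
    have h2 : Tendsto (fun N => (a N)^2) atTop (nhds 1) := by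
      have := ha1.mul ha1
      simp only [mul_one] at this
      refine this.congr (fun N => ?_)
      ring
    have h3 := h2.const_mul (ck s ℓ)
    simpa using h3
  refine hlim.congr' ?_
  filter_upwards [hM1, eventually_gt_atTop (ℓ+1)] with N hN hℓN
  obtain ⟨h1, h2⟩ := hN
  have hNpos : 0 < N := by omega
  have hMN : M N ≤ N := by omega
  have hndvd : ¬ N ∣ (ℓ+1) := by
    intro hd
    exact absurd (Nat.le_of_dvd (Nat.succ_pos ℓ) hd) (by omega)
  rw [if_neg hndvd, GG, TT_eq_range hMN hNpos hndvd]
  simp only [ha]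
  rw [div_pow, Complex.sq_norm]



lemma u_bound {s : ℝ} {M N : ℕ} (hM1 : 1 ≤ M) (hMN : 2*M < N) (ℓ : ℕ) :
    0 ≤ (if N ∣ (ℓ+1) then (0:ℝ) else GG s M N ℓ) ∧
    (if N ∣ (ℓ+1) then (0:ℝ) else GG s M N ℓ) ≤ ck s ℓ := by
  have hNpos : 0 < N := by omega
  have hMN' : M ≤ N := by omega
  by_cases hd : N ∣ (ℓ+1)
  · rw [if_pos hd]
    exact ⟨le_refl 0, (ck_pos s ℓ).le⟩
  · rw [if_neg hd]
    refine ⟨GG_nonneg s M N ℓ, ?_⟩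
    rw [GG]
    have hM2 : (0:ℝ) < (M:ℝ)^2 := by
      have : (0:ℝ) < M := by exact_mod_cast hM1
      positivity
    have hr : TT M N ℓ / (M:ℝ)^2 ≤ 1 := by
      rw [div_le_one hM2]; exact TT_le_ndvd hMN' hNpos hd
    calc ck s ℓ * (TT M N ℓ / (M:ℝ)^2) ≤ ck s ℓ * 1 :=
          mul_le_mul_of_nonneg_left hr (ck_pos s ℓ).le
    _ = ck s ℓ := mul_one _

lemma summable_u {s : ℝ} (hs : 1/2 < s) {M N : ℕ} (hM1 : 1 ≤ M) (hMN : 2*M < N) :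
    Summable (fun ℓ : ℕ => if N ∣ (ℓ+1) then (0:ℝ) else GG s M N ℓ) :=
  Summable.of_nonneg_of_le (fun ℓ => (u_bound hM1 hMN ℓ).1)
    (fun ℓ => (u_bound hM1 hMN ℓ).2) (summable_ck hs)

lemma v_bound {s : ℝ} {M N : ℕ} (hM1 : 1 ≤ M) (hMN : 2*M < N) (ℓ : ℕ) :
    0 ≤ (if N ∣ (ℓ+1) then GG s M N ℓ else (0:ℝ)) ∧
    (if N ∣ (ℓ+1) then GG s M N ℓ else (0:ℝ))
      ≤ (((N:ℝ)-M)^2/(M:ℝ)^2) * (if N ∣ (ℓ+1) then ck s ℓ else 0) := by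
  have hMN' : M ≤ N := by omega
  have hM2 : (0:ℝ) < (M:ℝ)^2 := by
    have : (0:ℝ) < M := by exact_mod_cast hM1
    positivity
  by_cases hd : N ∣ (ℓ+1)
  · rw [if_pos hd, if_pos hd]
    refine ⟨GG_nonneg s M N ℓ, ?_⟩
    rw [GG]
    have hr : TT M N ℓ / (M:ℝ)^2 ≤ ((N:ℝ)-M)^2/(M:ℝ)^2 :=
      (div_le_div_iff_of_pos_right hM2).mpr (TT_le_gen M N ℓ hMN')
    calc ck s ℓ * (TT M N ℓ / (M:ℝ)^2) ≤ ck s ℓ * (((N:ℝ)-M)^2/(M:ℝ)^2) :=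
          mul_le_mul_of_nonneg_left hr (ck_pos s ℓ).le
    _ = (((N:ℝ)-M)^2/(M:ℝ)^2) * ck s ℓ := by ring
  · rw [if_neg hd, if_neg hd, mul_zero]
    exact ⟨le_refl 0, le_refl 0⟩

lemma summable_v {s : ℝ} (hs : 1/2 < s) {M N : ℕ} (hM1 : 1 ≤ M) (hMN : 2*M < N) :
    Summable (fun ℓ : ℕ => if N ∣ (ℓ+1) then GG s M N ℓ else (0:ℝ)) :=
  Summable.of_nonneg_of_le (fun ℓ => (v_bound hM1 hMN ℓ).1)
    (fun ℓ => (v_bound hM1 hMN ℓ).2) ((summable_w hs N).mul_left _)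

lemma tsum_v_le {s : ℝ} (hs : 1/2 < s) {M N : ℕ} (hM1 : 1 ≤ M) (hMN : 2*M < N) :
    ∑' ℓ : ℕ, (if N ∣ (ℓ+1) then GG s M N ℓ else (0:ℝ))
      ≤ (((N:ℝ)-M)^2/(M:ℝ)^2) *
        ((N:ℝ)^(-(2*s)) * ∑' ν : ℕ, ((ν:ℝ)+1) ^ (-(2*s))) := by
  have hNpos : 0 < N := by omega
  have hC : (0:ℝ) ≤ ((N:ℝ)-M)^2/(M:ℝ)^2 := by positivity
  calc ∑' ℓ : ℕ, (if N ∣ (ℓ+1) then GG s M N ℓ else (0:ℝ))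
      ≤ ∑' ℓ : ℕ, (((N:ℝ)-M)^2/(M:ℝ)^2) * (if N ∣ (ℓ+1) then ck s ℓ else 0) :=
        Summable.tsum_le_tsum (fun ℓ => (v_bound hM1 hMN ℓ).2) (summable_v hs hM1 hMN)
          ((summable_w hs N).mul_left _)
  _ = (((N:ℝ)-M)^2/(M:ℝ)^2) * ∑' ℓ : ℕ, (if N ∣ (ℓ+1) then ck s ℓ else 0) :=
        tsum_mul_left
  _ ≤ (((N:ℝ)-M)^2/(M:ℝ)^2) *
        ((N:ℝ)^(-(2*s)) * ∑' ν : ℕ, ((ν:ℝ)+1) ^ (-(2*s))) :=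
        mul_le_mul_of_nonneg_left (tsum_div_le hs hNpos) hC

end RW


theorem roots_of_unity_minus_M_wce (s : ℝ) (hs : 1 / 2 < s) (M : ℕ → ℕ)
    (hMinfty : Tendsto (fun N : ℕ => M N) atTop atTop)
    (hMsmall : Tendsto (fun N : ℕ => (M N : ℝ) / (N : ℝ)) atTop (nhds 0))
    (hbig : Tendsto (fun N : ℕ => (N : ℝ) ^ s * (M N : ℝ) / ((N : ℝ) - (M N : ℝ)))
      atTop atTop) :
    Tendsto (fun N : ℕ =>
        Real.sqrt (wceSqRootsMinus s (M N) N) /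
          (Real.sqrt (circleBesselKernel (2 * s) 0) * ((M N : ℝ) / ((N : ℝ) - (M N : ℝ)))))
      atTop (nhds 1) ∧
    ¬ ∃ c > (0 : ℝ), ∀ N : ℕ, 2 ≤ N →
        Real.sqrt (wceSqRootsMinus s (M N) N) ≤ c * (N : ℝ) ^ (-s) := by
  classical
  have hc : Summable (RW.ck s) := RW.summable_ck hs
  set B : ℝ := ∑' ℓ : ℕ, RW.ck s ℓ with hB
  have hBpos : 0 < B := Summable.tsum_pos hc (fun ℓ => (RW.ck_pos s ℓ).le) 0 (RW.ck_pos s 0)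
  have hkz : circleBesselKernel (2*s) 0 = 2*B := RW.kernel_zero s
  have hgood : ∀ᶠ N : ℕ in atTop, 1 ≤ M N ∧ 2 * M N < N := by
    have h1 : ∀ᶠ N : ℕ in atTop, 1 ≤ M N := hMinfty.eventually_ge_atTop 1
    have h2 : ∀ᶠ N : ℕ in atTop, (M N : ℝ)/N < 1/2 :=
      hMsmall.eventually (gt_mem_nhds (by norm_num))
    have h3 : ∀ᶠ N : ℕ in atTop, 1 ≤ N := eventually_ge_atTop 1
    filter_upwards [h1, h2, h3] with N hN1 hN2 hN3
    refine ⟨hN1, ?_⟩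
    have hNr : (0:ℝ) < N := by exact_mod_cast hN3
    rw [div_lt_iff₀ hNr] at hN2
    have h4 : ((2 * M N : ℕ):ℝ) < (N:ℝ) := by push_cast; linarith
    exact_mod_cast h4
  -- limit of the non-divisible part
  have hU : Tendsto (fun N : ℕ => ∑' ℓ : ℕ,
      (if N ∣ (ℓ+1) then (0:ℝ) else RW.GG s (M N) N ℓ)) atTop (nhds B) := by
    rw [hB]
    refine tendsto_tsum_of_dominated_convergence hc
      (fun ℓ => RW.u_tendsto s M hgood hMsmall ℓ) ?_
    filter_upwards [hgood] with N hN
    intro ℓ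
    obtain ⟨h1, h2⟩ := hN
    rw [Real.norm_eq_abs, abs_of_nonneg (RW.u_bound h1 h2 ℓ).1]
    exact (RW.u_bound h1 h2 ℓ).2
  -- the divisible part tends to zero
  have hq2 : Tendsto (fun N : ℕ =>
      (((N:ℝ)^s * (M N:ℝ) / ((N:ℝ) - M N)) * ((N:ℝ)^s * (M N:ℝ) / ((N:ℝ) - M N)))⁻¹)
      atTop (nhds 0) := (hbig.atTop_mul_atTop₀ hbig).inv_tendsto_atTop
  set K : ℝ := ∑' ν : ℕ, ((ν:ℝ)+1) ^ (-(2*s)) with hKdef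
  have hV : Tendsto (fun N : ℕ => ∑' ℓ : ℕ,
      (if N ∣ (ℓ+1) then RW.GG s (M N) N ℓ else (0:ℝ))) atTop (nhds 0) := by
    refine squeeze_zero' ?_ ?_ (g := fun N : ℕ => K *
      (((N:ℝ)^s * (M N:ℝ) / ((N:ℝ) - M N)) * ((N:ℝ)^s * (M N:ℝ) / ((N:ℝ) - M N)))⁻¹)
      (by simpa using hq2.const_mul K)
    · filter_upwards with N
      refine tsum_nonneg (fun ℓ => ?_)
      split
      · exact RW.GG_nonneg s _ _ _
      · exact le_refl 0
    · filter_upwards [hgood] with N hN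
      obtain ⟨h1, h2⟩ := hN
      have hNpos : 0 < N := by omega
      have hMr : (0:ℝ) < M N := by exact_mod_cast h1
      have hNr : (0:ℝ) < N := by exact_mod_cast hNpos
      have hMNr : (M N:ℝ) < N := by
        have : M N < N := by omega
        exact_mod_cast this
      have hNM : (0:ℝ) < (N:ℝ) - M N := by linarith
      refine (RW.tsum_v_le hs h1 h2).trans ?_
      have hNs : (0:ℝ) < (N:ℝ)^s := Real.rpow_pos_of_pos hNr s
      have h2s : (N:ℝ)^(-(2*s)) = ((N:ℝ)^s * (N:ℝ)^s)⁻¹ := by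
        rw [← Real.rpow_add hNr, ← Real.rpow_neg hNr.le]
        congr 1
        ring
      rw [h2s]
      refine le_of_eq ?_
      rw [hKdef]
      field_simp
  -- combine
  have hGG : Tendsto (fun N : ℕ => ∑' ℓ : ℕ, RW.GG s (M N) N ℓ) atTop (nhds B) := by
    have hadd := hU.add hV
    rw [add_zero] at hadd
    refine hadd.congr' ?_
    filter_upwards [hgood] with N hN
    obtain ⟨h1, h2⟩ := hN
    rw [← Summable.tsum_add (RW.summable_u hs h1 h2) (RW.summable_v hs h1 h2)]
    apply tsum_congr; intro ℓ
    by_cases hd : N ∣ (ℓ+1)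
    · rw [if_pos hd, if_pos hd, zero_add]
    · rw [if_neg hd, if_neg hd, add_zero]
  have hR : Tendsto (fun N : ℕ => 2 * ∑' ℓ : ℕ, RW.GG s (M N) N ℓ) atTop (nhds (2*B)) := by
    simpa using hGG.const_mul 2
  have hsqB : (0:ℝ) < Real.sqrt (2*B) := Real.sqrt_pos.mpr (by linarith)
  have hsq : Tendsto (fun N : ℕ => Real.sqrt (2 * ∑' ℓ : ℕ, RW.GG s (M N) N ℓ) /
      Real.sqrt (2*B)) atTop (nhds 1) := by
    have h1 := (hR.sqrt).div_const (Real.sqrt (2*B))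
    rwa [div_self (ne_of_gt hsqB)] at h1
  have hRatio : Tendsto (fun N : ℕ =>
      Real.sqrt (wceSqRootsMinus s (M N) N) /
        (Real.sqrt (circleBesselKernel (2 * s) 0) * ((M N : ℝ) / ((N : ℝ) - (M N : ℝ)))))
      atTop (nhds 1) := by
    refine hsq.congr' ?_
    filter_upwards [hgood] with N hN
    obtain ⟨h1, h2⟩ := hN
    have hNpos : 0 < N := by omega
    have hMN : M N < N := by omega
    have hMr : (0:ℝ) < M N := by exact_mod_cast h1
    have hMNr : (M N:ℝ) < N := by exact_mod_cast hMN
    have hNM : (0:ℝ) < (N:ℝ) - M N := by linarith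
    have hX : (0:ℝ) < (M N:ℝ)/((N:ℝ) - M N) := div_pos hMr hNM
    rw [hkz, RW.wce_eq2 s hs (M N) N h1 hMN]
    have hGnn : (0:ℝ) ≤ 2 * ∑' ℓ : ℕ, RW.GG s (M N) N ℓ := by
      have h3 : (0:ℝ) ≤ ∑' ℓ : ℕ, RW.GG s (M N) N ℓ :=
        tsum_nonneg (fun ℓ => RW.GG_nonneg s _ _ _)
      linarith
    rw [Real.sqrt_mul hGnn, Real.sqrt_sq hX.le]
    rw [mul_div_mul_right _ _ (ne_of_gt hX)]
  refine ⟨hRatio, ?_⟩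
  rintro ⟨c, hc0, hle⟩
  have h2ev : ∀ᶠ N : ℕ in atTop, 1/2 < Real.sqrt (wceSqRootsMinus s (M N) N) /
      (Real.sqrt (circleBesselKernel (2 * s) 0) * ((M N : ℝ) / ((N : ℝ) - (M N : ℝ)))) :=
    hRatio.eventually (eventually_gt_nhds (by norm_num))
  have h3ev : ∀ᶠ N : ℕ in atTop,
      2*c/Real.sqrt (2*B) < (N:ℝ)^s * (M N:ℝ) / ((N:ℝ) - M N) :=
    hbig.eventually_gt_atTop _
  obtain ⟨N, hgN, h2N, h3N, hN2⟩ :=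
    (hgood.and (h2ev.and (h3ev.and (eventually_ge_atTop 2)))).exists
  obtain ⟨h1, h2⟩ := hgN
  have hNpos : 0 < N := by omega
  have hMN : M N < N := by omega
  have hMr : (0:ℝ) < M N := by exact_mod_cast h1
  have hNr : (0:ℝ) < N := by exact_mod_cast hNpos
  have hMNr : (M N:ℝ) < N := by exact_mod_cast hMN
  have hNM : (0:ℝ) < (N:ℝ) - M N := by linarith
  have hX : (0:ℝ) < (M N:ℝ)/((N:ℝ) - M N) := div_pos hMr hNM
  have hNs : (0:ℝ) < (N:ℝ)^s := Real.rpow_pos_of_pos hNr s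
  rw [hkz] at h2N
  have hwle := hle N hN2
  rw [Real.rpow_neg (Nat.cast_nonneg N), ← div_eq_mul_inv] at hwle
  -- from the ratio bound: sqrt(2B) * X / 2 < sqrt wce
  have hlow : Real.sqrt (2*B) * ((M N:ℝ)/((N:ℝ) - M N)) * (1/2)
      < Real.sqrt (wceSqRootsMinus s (M N) N) := by
    have hbX : (0:ℝ) < Real.sqrt (2*B) * ((M N:ℝ)/((N:ℝ) - M N)) := mul_pos hsqB hX
    have := (lt_div_iff₀ hbX).mp h2N
    linarith
  -- so sqrt(2B) * X / 2 < c / N^s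
  have hc1 : Real.sqrt (2*B) * ((M N:ℝ)/((N:ℝ) - M N)) * (1/2) < c / (N:ℝ)^s :=
    lt_of_lt_of_le hlow hwle
  have hc2 : Real.sqrt (2*B) * ((M N:ℝ)/((N:ℝ) - M N)) * (1/2) * (N:ℝ)^s < c :=
    (lt_div_iff₀ hNs).mp hc1
  have h3' : 2*c < ((N:ℝ)^s * (M N:ℝ) / ((N:ℝ) - M N)) * Real.sqrt (2*B) :=
    (div_lt_iff₀ hsqB).mp h3N
  have hPE : ((N:ℝ)^s * (M N:ℝ) / ((N:ℝ) - M N))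
      = (N:ℝ)^s * ((M N:ℝ)/((N:ℝ) - M N)) := by ring
  rw [hPE] at h3'
  nlinarith [hc2, h3']
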